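/- arXiv:2210.17147 — 2 statements merged into one kernel-verified Lean document; each statement's English description precedes it below -/
import Mathlib

section
/- For the odd cycle C_{2n+1} with n ≥ 1, the set of cardinalities of vertex subsets inducing perfectly matchable subgraphs is exactly {0, 2, 4, …, 2n}. -/
/-- `S` induces a perfectly matchable subgraph of `G`. -/
def matchableSet {V : Type*} (G : SimpleGraph V) (S : Set V) : Prop :=
  ∃ M : Set (Sym2 V), M ⊆ G.edgeSet ∧
    (M.Pairwise fun e f => ∀ v, ¬(v ∈ e ∧ v ∈ f)) ∧
    ∀ v, v ∈ S ↔ ∃ e ∈ M, v ∈ e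

lemma even_cover {V : Type*} [Fintype V] {G : SimpleGraph V}
    (M : Set (Sym2 V)) (hE : M ⊆ G.edgeSet)
    (hP : M.Pairwise fun e f => ∀ v, ¬(v ∈ e ∧ v ∈ f)) :
    Even {v | ∃ e ∈ M, v ∈ e}.ncard := by
  classical
  have hfin : M.Finite := Set.toFinite M
  revert hE hP
  refine Set.Finite.induction_on (motive := fun M _ => M ⊆ G.edgeSet →
      (M.Pairwise fun e f => ∀ v, ¬(v ∈ e ∧ v ∈ f)) →
      Even {v | ∃ e ∈ M, v ∈ e}.ncard) M hfin (by simp) ?_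
  intro e M' he hfin ih hE hP
  have hE' : M' ⊆ G.edgeSet := fun f hf => hE (Set.mem_insert_of_mem _ hf)
  have hP' : M'.Pairwise fun e f => ∀ v, ¬(v ∈ e ∧ v ∈ f) :=
    hP.mono (Set.subset_insert _ _)
  have ihe := ih hE' hP'
  -- e is a non-loop edge
  have heE : e ∈ G.edgeSet := hE (Set.mem_insert _ _)
  revert heE hE hP he
  induction e using Sym2.ind with
  | _ a b =>
  intro he hE hP heE
  have hab : a ≠ b := (G.mem_edgeSet.mp heE).ne
  have hdisj : ∀ v, (v ∈ (s(a, b) : Sym2 V)) → v ∉ {v | ∃ e ∈ M', v ∈ e} := by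
    intro v hv hv'
    obtain ⟨f, hf, hvf⟩ := hv'
    have hne : (s(a, b) : Sym2 V) ≠ f := fun h => he (h ▸ hf)
    exact hP (Set.mem_insert _ _) (Set.mem_insert_of_mem _ hf) hne v ⟨hv, hvf⟩
  have hset : {v | ∃ e ∈ insert (s(a, b) : Sym2 V) M', v ∈ e}
      = insert a (insert b {v | ∃ e ∈ M', v ∈ e}) := by
    ext v
    simp only [Set.mem_setOf_eq, Set.mem_insert_iff]
    constructor
    · rintro ⟨f, hf | hf, hvf⟩
      · subst hf
        rcases Sym2.mem_iff.mp hvf with h | h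
        · exact Or.inl h
        · exact Or.inr (Or.inl h)
      · exact Or.inr (Or.inr ⟨f, hf, hvf⟩)
    · rintro (h | h | ⟨f, hf, hvf⟩)
      · exact ⟨s(a, b), Or.inl rfl, Sym2.mem_iff.mpr (Or.inl h)⟩
      · exact ⟨s(a, b), Or.inl rfl, Sym2.mem_iff.mpr (Or.inr h)⟩
      · exact ⟨f, Or.inr hf, hvf⟩
  rw [hset]
  have hbnot : b ∉ {v | ∃ e ∈ M', v ∈ e} := hdisj b (Sym2.mem_mk_right a b)
  have hanot : a ∉ insert b {v | ∃ e ∈ M', v ∈ e} := by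
    intro h
    rcases h with h | h
    · exact hab h
    · exact hdisj a (Sym2.mem_mk_left a b) h
  rw [Set.ncard_insert_of_notMem hanot (Set.toFinite _),
    Set.ncard_insert_of_notMem hbnot (Set.toFinite _)]
  obtain ⟨r, hr⟩ := ihe
  exact ⟨r + 1, by omega⟩

/-- For the odd cycle `C_{2n+1}` with `n ≥ 1`, the cardinalities of vertex subsets inducing
perfectly matchable subgraphs are exactly `{0, 2, 4, …, 2n}`. -/
theorem oddCycle_pms_cardinalities (n : ℕ) (hn : 1 ≤ n) :
    {k : ℕ | ∃ S : Set (Fin (2 * n + 1)),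
        matchableSet (SimpleGraph.cycleGraph (2 * n + 1)) S ∧ S.ncard = k} =
      {k : ℕ | Even k ∧ k ≤ 2 * n} := by
  classical
  ext k
  simp only [Set.mem_setOf_eq]
  constructor
  · rintro ⟨S, ⟨M, hE, hP, hS⟩, rfl⟩
    have hSeq : S = {v | ∃ e ∈ M, v ∈ e} := Set.ext hS
    have heven : Even S.ncard := hSeq ▸ even_cover M hE hP
    refine ⟨heven, ?_⟩
    have hle : S.ncard ≤ 2 * n + 1 := by
      have := Set.ncard_le_ncard (Set.subset_univ S) (Set.toFinite _)
      rwa [Set.ncard_univ, Nat.card_eq_fintype_card, Fintype.card_fin] at this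
    obtain ⟨r, hr⟩ := heven
    omega
  · rintro ⟨⟨m, rfl⟩, hk⟩
    have hm : m ≤ n := by omega
    set N := 2 * n + 1 with hN
    have hpos : 0 < N := by omega
    set g : ℕ → Fin N := fun j => ⟨j % N, Nat.mod_lt _ hpos⟩ with hg
    have hgval : ∀ j, j < N → (g j).val = j := fun j hj => Nat.mod_eq_of_lt hj
    set M : Set (Sym2 (Fin N)) := (fun i => s(g (2 * i), g (2 * i + 1))) '' Set.Iio m with hM
    set S : Set (Fin N) := {v | v.val < m + m} with hSdef
    refine ⟨S, ⟨M, ?_, ?_, ?_⟩, ?_⟩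
    · -- M ⊆ edgeSet
      rintro e ⟨i, hi, rfl⟩
      rw [Set.mem_Iio] at hi
      rw [SimpleGraph.mem_edgeSet, SimpleGraph.cycleGraph_adj']
      right
      have h1 : (g (2 * i)).val = 2 * i := hgval _ (by omega)
      have h2 : (g (2 * i + 1)).val = 2 * i + 1 := hgval _ (by omega)
      rw [Fin.sub_def]
      simp only [h1, h2]
      have e1 : 2 * i % N = 2 * i := Nat.mod_eq_of_lt (by omega)
      have e2 : (2 * i + 1) % N = 2 * i + 1 := Nat.mod_eq_of_lt (by omega)
      have e3 : N - 2 * i + (2 * i + 1) = N + 1 := by omega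
      rw [e3, Nat.add_mod_left]
      exact Nat.mod_eq_of_lt (by omega)
    · -- pairwise disjoint
      rintro e ⟨i, hi, rfl⟩ f ⟨j, hj, rfl⟩ hne v ⟨hv1, hv2⟩
      rw [Set.mem_Iio] at hi hj
      have h1 : (g (2 * i)).val = 2 * i := hgval _ (by omega)
      have h2 : (g (2 * i + 1)).val = 2 * i + 1 := hgval _ (by omega)
      have h3 : (g (2 * j)).val = 2 * j := hgval _ (by omega)
      have h4 : (g (2 * j + 1)).val = 2 * j + 1 := hgval _ (by omega)
      have hij : i = j := by
        rcases Sym2.mem_iff.mp hv1 with rfl | rfl <;>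
          rcases Sym2.mem_iff.mp hv2 with h | h <;>
          · have := congrArg Fin.val h
            omega
      exact hne (by rw [hij])
    · -- S is exactly the cover
      intro v
      simp only [hSdef, Set.mem_setOf_eq]
      constructor
      · intro hv
        refine ⟨s(g (2 * (v.val / 2)), g (2 * (v.val / 2) + 1)), ⟨v.val / 2, by
          simp only [Set.mem_Iio]; omega, rfl⟩, ?_⟩
        rcases Nat.even_or_odd v.val with he | ho
        · apply Sym2.mem_iff.mpr
          left
          apply Fin.ext
          rw [hgval _ (by omega)]
          obtain ⟨r, hr⟩ := he
          omega
        · apply Sym2.mem_iff.mpr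
          right
          apply Fin.ext
          rw [hgval _ (by omega)]
          obtain ⟨r, hr⟩ := ho
          omega
      · rintro ⟨e, ⟨i, hi, rfl⟩, hv⟩
        rw [Set.mem_Iio] at hi
        have h1 : (g (2 * i)).val = 2 * i := hgval _ (by omega)
        have h2 : (g (2 * i + 1)).val = 2 * i + 1 := hgval _ (by omega)
        rcases Sym2.mem_iff.mp hv with rfl | rfl <;> omega
    · -- cardinality
      have hSeq : S = g '' Set.Iio (m + m) := by
        ext v
        simp only [hSdef, Set.mem_setOf_eq, Set.mem_image, Set.mem_Iio]
        constructor
        · intro hv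
          exact ⟨v.val, hv, Fin.ext (hgval _ v.isLt)⟩
        · rintro ⟨j, hj, rfl⟩
          rw [hgval _ (by omega)]
          exact hj
      have hinj : Set.InjOn g (Set.Iio (m + m)) := by
        intro x hx y hy hxy
        simp only [Set.mem_Iio] at hx hy
        have := congrArg Fin.val hxy
        rw [hgval _ (by omega), hgval _ (by omega)] at this
        exact this
      rw [hSeq, Set.ncard_image_of_injOn hinj]
      have : Set.Iio (m + m) = ↑(Finset.range (m + m)) := by
        ext j; simp
      rw [this, Set.ncard_coe_finset, Finset.card_range]
end

section
/- Let P ⊆ P' ⊆ ℝⁿ be lattice polytopes with P ∩ ℤⁿ = {a₁,…,a_m}, and suppose every lattice point of P' is a nonnegative integer combination of a₁,…,a_m. Suppose there exists w ∈ ℝⁿ with aᵢ · w = 1 for all i. If P' is normal, then P is normal. -/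
open Pointwise Matrix
/-- A point of `ℝⁿ` with integer coordinates. -/
def IsLatticePoint {n : ℕ} (x : Fin n → ℝ) : Prop := ∀ i, ∃ z : ℤ, x i = (z : ℝ)

/-- The sublattice of `ℤⁿ` (as an additive subgroup of `ℝⁿ`) generated by the lattice points
of `P`. -/
def latticeSpan {n : ℕ} (P : Set (Fin n → ℝ)) : AddSubgroup (Fin n → ℝ) :=
  AddSubgroup.closure {x ∈ P | IsLatticePoint x}

/-- `P` is normal: every point of `kP ∩ L_P` is a sum of `k` lattice points of `P`. -/
def IsNormalPolytope {n : ℕ} (P : Set (Fin n → ℝ)) : Prop :=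
  ∀ k : ℕ, 0 < k → ∀ x, x ∈ (k : ℝ) • P → x ∈ latticeSpan P →
    ∃ f : Fin k → (Fin n → ℝ), (∀ i, f i ∈ P ∧ IsLatticePoint (f i)) ∧ x = ∑ i, f i

/-- If `P ⊆ P'` are lattice polytopes, every lattice point of `P'` is a nonnegative integer
combination of the lattice points `a₁, …, a_m` of `P`, and there is `w` with `aᵢ · w = 1` for
all `i`, then normality of `P'` implies normality of `P`. -/
theorem normal_of_subpolytope {n m : ℕ} (P P' : Set (Fin n → ℝ))
    (hPpoly : ∃ s : Finset (Fin n → ℝ), (∀ x ∈ s, IsLatticePoint x) ∧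
      P = convexHull ℝ (s : Set (Fin n → ℝ)))
    (hP'poly : ∃ s : Finset (Fin n → ℝ), (∀ x ∈ s, IsLatticePoint x) ∧
      P' = convexHull ℝ (s : Set (Fin n → ℝ)))
    (hsub : P ⊆ P')
    (a : Fin m → (Fin n → ℝ))
    (ha : {x ∈ P | IsLatticePoint x} = Set.range a)
    (hcomb : ∀ x ∈ P', IsLatticePoint x → ∃ c : Fin m → ℕ, x = ∑ i, (c i : ℝ) • a i)
    (w : Fin n → ℝ) (hw : ∀ i, a i ⬝ᵥ w = 1)
    (hP' : IsNormalPolytope P') :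
    IsNormalPolytope P := by
  obtain ⟨s, hs_lat, hsP⟩ := hPpoly
  have haP : ∀ j, a j ∈ P ∧ IsLatticePoint (a j) := by
    intro j
    have : a j ∈ Set.range a := ⟨j, rfl⟩
    rw [← ha] at this
    exact this
  intro k hk x hxk hxL
  obtain ⟨p, hp, hpx⟩ := hxk
  have hxk' : x ∈ (k : ℝ) • P' := ⟨p, hsub hp, hpx⟩
  have hL' : x ∈ latticeSpan P' := by
    refine AddSubgroup.closure_mono ?_ hxL
    intro y hy; exact ⟨hsub hy.1, hy.2⟩
  obtain ⟨g, hg, hxg⟩ := hP' k hk x hxk' hL'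
  choose c hc using fun i => hcomb (g i) (hg i).1 (hg i).2
  set d : Fin m → ℕ := fun j => ∑ i, c i j with hd
  have hx : x = ∑ j, (d j : ℝ) • a j := by
    rw [hxg, Finset.sum_congr rfl fun i _ => hc i, Finset.sum_comm]
    refine Finset.sum_congr rfl fun j _ => ?_
    rw [← Finset.sum_smul]
    congr 1
    simp [hd]
  -- p ⬝ᵥ w = 1
  have hconv : Convex ℝ {x : Fin n → ℝ | x ⬝ᵥ w = 1} := by
    intro u hu v hv α β hα hβ hab
    simp only [Set.mem_setOf_eq] at *
    rw [add_dotProduct, smul_dotProduct, smul_dotProduct, hu, hv]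
    simpa [smul_eq_mul] using hab
  have hs_sub : (s : Set (Fin n → ℝ)) ⊆ {x | x ⬝ᵥ w = 1} := by
    intro y hy
    have hyP : y ∈ P := by rw [hsP]; exact subset_convexHull ℝ _ hy
    have : y ∈ Set.range a := by rw [← ha]; exact ⟨hyP, hs_lat y hy⟩
    obtain ⟨j, rfl⟩ := this
    exact hw j
  have hpw : p ⬝ᵥ w = 1 := by
    have hpc : p ∈ convexHull ℝ (s : Set (Fin n → ℝ)) := by rw [← hsP]; exact hp
    exact convexHull_min hs_sub hconv hpc
  have h1 : x ⬝ᵥ w = (k : ℝ) := by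
    rw [← hpx, smul_dotProduct, hpw, smul_eq_mul, mul_one]
  have hsd : ∀ (f : Fin m → Fin n → ℝ) (t : Finset (Fin m)),
      (∑ i ∈ t, f i) ⬝ᵥ w = ∑ i ∈ t, f i ⬝ᵥ w := by
    intro f t
    simp only [dotProduct, Finset.sum_apply, Finset.sum_mul]
    exact Finset.sum_comm
  have h2 : x ⬝ᵥ w = ∑ j, (d j : ℝ) := by
    rw [hx, hsd]
    refine Finset.sum_congr rfl fun j _ => ?_
    rw [smul_dotProduct, hw j, smul_eq_mul, mul_one]
  have hdk : ∑ j, d j = k := by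
    have : ((∑ j, d j : ℕ) : ℝ) = (k : ℝ) := by push_cast; rw [← h2, h1]
    exact_mod_cast this
  -- the multiset
  set M : Multiset (Fin n → ℝ) := ∑ j, Multiset.replicate (d j) (a j) with hM
  have hcard : Multiset.card M = k := by
    rw [hM, Multiset.card_sum]
    simpa [Multiset.card_replicate] using hdk
  have hMsum : M.sum = x := by
    rw [hM, ← Multiset.coe_sumAddMonoidHom, map_sum, hx]
    refine Finset.sum_congr rfl fun j _ => ?_
    rw [Multiset.coe_sumAddMonoidHom]
    show (Multiset.replicate (d j) (a j)).sum = _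
    rw [Multiset.sum_replicate, Nat.cast_smul_eq_nsmul]
  have hMmem : ∀ y ∈ M, ∃ j, y = a j := by
    intro y hy
    rw [hM, Multiset.mem_sum] at hy
    obtain ⟨j, -, hj⟩ := hy
    exact ⟨j, Multiset.eq_of_mem_replicate hj⟩
  set L := M.toList with hL
  have hlen : L.length = k := by rw [hL, Multiset.length_toList, hcard]
  refine ⟨fun i => L.get (Fin.cast hlen.symm i), fun i => ?_, ?_⟩
  · have hmem : L.get (Fin.cast hlen.symm i) ∈ M := by
      rw [← Multiset.mem_toList]; exact List.get_mem _ _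
    obtain ⟨j, hj⟩ := hMmem _ hmem
    dsimp only
    rw [hj]
    exact haP j
  · have : ∑ i : Fin k, L.get (Fin.cast hlen.symm i) = ∑ i : Fin L.length, L.get i :=
      Fintype.sum_equiv (finCongr hlen.symm) _ _ (fun i => rfl)
    rw [this]
    have hget : ∑ i : Fin L.length, L.get i = L.sum := by
      simpa using Fin.sum_univ_get L
    rw [hget, hL, Multiset.sum_toList, hMsum]
end
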